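/- For every integer n ≥ 0 and every z ∈ ℂ with z ≠ 0 and z² ≠ 1, the CMV Laurent polynomials ψ_n(z;1) associated with the Jacobi Verblunsky parameters (a_n) satisfy the Dunkl-type eigenvalue equation z·(d/dz)ψ_n(z;1) + [z·((α+β+1)z + α−β)/(1−z²)]·(ψ_n(1/z;1) − ψ_n(z;1)) = μ_n·ψ_n(z;1), where μ_n = −n/2 if n is even and μ_n = (n+1)/2 + α + β + 1 if n is odd. -/

import Mathlib

open Finset

/-- Monic OPUC associated to a sequence of (real) Verblunsky parameters. -/
noncomputable def Phi (c : ℕ → ℝ) : ℕ → ℂ → ℂ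
  | 0, _ => 1
  | n + 1, z => z * Phi c n z - (c n : ℂ) * z ^ n * Phi c n z⁻¹

/-- CMV Laurent polynomials: ψ_{2m} z = z^m Φ_{2m}(1/z), ψ_{2m+1} z = z^{-m} Φ_{2m+1}(z). -/
noncomputable def psi (c : ℕ → ℝ) (n : ℕ) (z : ℂ) : ℂ :=
  if Even n then z ^ (n / 2) * Phi c n z⁻¹
  else z ^ (-((n / 2 : ℕ) : ℤ)) * Phi c n z

/-- Verblunsky parameters of the Jacobi OPUC. -/
noncomputable def jacobiA (α β : ℝ) (n : ℕ) : ℝ :=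
  -(α + 1 / 2 + (-1 : ℝ) ^ (n + 1) * (β + 1 / 2)) / (n + α + β + 2)

/-- Sieved Verblunsky parameters: a_n(N) = a_{k-1} if n = N k - 1 (k ≥ 1), 0 otherwise. -/
noncomputable def sievedA (α β : ℝ) (N n : ℕ) : ℝ :=
  if N ∣ (n + 1) then jacobiA α β ((n + 1) / N - 1) else 0

/-- The primitive N-th root of unity q = exp(2πi/N). -/
noncomputable def qN (N : ℕ) : ℂ := Complex.exp (2 * Real.pi * Complex.I / N)

/-- The coefficients A_k(z;N) of the Dunkl-type operator L(N). -/
noncomputable def Acoef (α β : ℝ) (N k : ℕ) (z : ℂ) : ℂ :=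
  if Even N then
    ((α : ℂ) + β + 1 + (-1 : ℂ) ^ k * ((α : ℂ) - β)) * z ^ 2 / (qN N ^ k - z ^ 2)
  else
    (((α : ℂ) + β + 1) * z ^ 2 +
        (if Even k then qN N ^ ((k : ℤ) / 2) else qN N ^ (((k : ℤ) - (N : ℤ)) / 2)) *
          ((α : ℂ) - β) * z) /
      (qN N ^ k - z ^ 2)

/-- B(z) = N((α+β+1) z^{2N} + (α-β) z^N)/(z^{2N} - 1). -/
noncomputable def Bfun (α β : ℝ) (N : ℕ) (z : ℂ) : ℂ :=
  (N : ℂ) * (((α : ℂ) + β + 1) * z ^ (2 * N) + ((α : ℂ) - β) * z ^ N) / (z ^ (2 * N) - 1)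

/-- The Dunkl-type operator L(N). -/
noncomputable def Lop (α β : ℝ) (N : ℕ) (f : ℂ → ℂ) : ℂ → ℂ := fun z =>
  z * deriv f z + ∑ k ∈ Finset.range N, Acoef α β N k z * (f (qN N ^ k / z) - f z)

/-- A function ℂ∖{0} → ℂ is a Laurent polynomial. -/
def IsLaurentPoly (f : ℂ → ℂ) : Prop :=
  ∃ (m : ℕ) (p : Polynomial ℂ), ∀ z : ℂ, z ≠ 0 → f z = Polynomial.eval z p / z ^ m

/-- Sieved Jacobi polynomial of the first kind, as a function of z (x = z + 1/z). -/
noncomputable def sievP (α β : ℝ) (N n : ℕ) (z : ℂ) : ℂ :=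
  psi (sievedA α β N) (2 * n) z
    + (1 + (sievedA α β N (2 * n - 1) : ℂ)) * psi (sievedA α β N) (2 * n - 1) z

/-- χ_n(z) = (z - 1/z) Q_{n-1}(x(z)), with Q the sieved Jacobi polynomial of 2nd kind. -/
noncomputable def sievChi (α β : ℝ) (N n : ℕ) (z : ℂ) : ℂ :=
  -psi (sievedA α β N) (2 * n) z
    + (1 - (sievedA α β N (2 * n - 1) : ℂ)) * psi (sievedA α β N) (2 * n - 1) z

lemma Phi_succ (c : ℕ → ℝ) (n : ℕ) :
    Phi c (n+1) = fun z => z * Phi c n z - (c n : ℂ) * z ^ n * Phi c n z⁻¹ := rfl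

lemma Phi_diff (c : ℕ → ℝ) : ∀ (n : ℕ) (z : ℂ), z ≠ 0 → DifferentiableAt ℂ (Phi c n) z := by
  intro n
  induction n with
  | zero =>
    intro z hz
    have h : Phi c 0 = fun _ : ℂ => (1:ℂ) := rfl
    rw [h]; exact differentiableAt_const 1
  | succ n ih =>
    intro z hz
    rw [Phi_succ]
    have h1 : DifferentiableAt ℂ (fun z : ℂ => Phi c n z⁻¹) z :=
      (ih z⁻¹ (inv_ne_zero hz)).comp z (differentiableAt_inv hz)
    exact (differentiableAt_id.mul (ih z hz)).sub
      (((differentiableAt_const _).mul (differentiableAt_pow n)).mul h1)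

lemma psi_even (c : ℕ → ℝ) (m : ℕ) (z : ℂ) :
    psi c (2*m) z = z ^ m * Phi c (2*m) z⁻¹ := by
  simp [psi, even_two_mul m, Nat.mul_div_cancel_left m (by norm_num : 0 < 2)]

lemma psi_odd (c : ℕ → ℝ) (m : ℕ) (z : ℂ) :
    psi c (2*m+1) z = z ^ (-(m:ℤ)) * Phi c (2*m+1) z := by
  have h2 : ¬ Even (2*m+1) := by simp [Nat.even_add_one, even_two_mul]
  have h3 : (2*m+1)/2 = m := by omega
  rw [psi, if_neg h2, h3]

lemma psi_diff (c : ℕ → ℝ) (n : ℕ) (z : ℂ) (hz : z ≠ 0) :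
    DifferentiableAt ℂ (psi c n) z := by
  have h1 : DifferentiableAt ℂ (fun z : ℂ => Phi c n z⁻¹) z :=
    ((Phi_diff c n) z⁻¹ (inv_ne_zero hz)).comp z (differentiableAt_inv hz)
  by_cases hn : Even n
  · have h : psi c n = fun z : ℂ => z ^ (n/2) * Phi c n z⁻¹ := by
      funext w; rw [psi, if_pos hn]
    rw [h]
    exact (differentiableAt_pow _).mul h1
  · have h : psi c n = fun z : ℂ => z ^ (-((n / 2 : ℕ) : ℤ)) * Phi c n z := by
      funext w; rw [psi, if_neg hn]
    rw [h]
    exact ((differentiableAt_zpow.mpr (Or.inl hz))).mul (Phi_diff c n z hz)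

lemma psi_rec_odd (c : ℕ → ℝ) (m : ℕ) (z : ℂ) (hz : z ≠ 0) :
    psi c (2*m+1) z = z * psi c (2*m) z⁻¹ - (c (2*m) : ℂ) * psi c (2*m) z := by
  rw [psi_odd, psi_even, psi_even, inv_inv, Phi_succ]
  have hzm : z ^ m ≠ 0 := pow_ne_zero _ hz
  rw [zpow_neg, zpow_natCast]
  field_simp
  have hzz : z^m * (1/z)^m = 1 := by rw [← mul_pow, mul_one_div_cancel hz, one_pow]
  linear_combination (-(z * Phi c (2*m) z)) * hzz

lemma psi_rec_even (c : ℕ → ℝ) (m : ℕ) (z : ℂ) (hz : z ≠ 0) :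
    psi c (2*m+2) z = psi c (2*m+1) z⁻¹ - (c (2*m+1) : ℂ) * psi c (2*m+1) z := by
  have h1 : 2*m+2 = 2*(m+1) := by ring
  rw [h1, psi_even, psi_odd, psi_odd]
  rw [show 2*(m+1) = (2*m+1)+1 from by ring]
  simp only [Phi_succ]
  have hzm : z ^ m ≠ 0 := pow_ne_zero _ hz
  rw [zpow_neg, zpow_natCast, zpow_neg, zpow_natCast]
  field_simp [hz]
  simp only [one_div, inv_pow]
  field_simp
  ring

def Eig (α β : ℝ) (n : ℕ) (μ : ℂ) : Prop :=
  ∀ z : ℂ, z ≠ 0 → z ^ 2 ≠ 1 →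
    z * deriv (psi (jacobiA α β) n) z
      + z * (((α : ℂ) + β + 1) * z + ((α : ℂ) - β)) / (1 - z ^ 2)
        * (psi (jacobiA α β) n z⁻¹ - psi (jacobiA α β) n z)
      = μ * psi (jacobiA α β) n z

lemma jacobiA_even (α β : ℝ) (hα : -1 < α) (hβ : -1 < β) (m : ℕ) :
    ((jacobiA α β (2*m) : ℝ) : ℂ) * ((2*m : ℂ) + α + β + 2) = -((α:ℂ) - β) ∧
      ((2*m : ℂ) + α + β + 2) ≠ 0 := by
  have hd : (0:ℝ) < 2*m + α + β + 2 := by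
    have : (0:ℝ) ≤ 2*m := by positivity
    linarith
  have hd' : ((2*m : ℂ) + α + β + 2) ≠ 0 := by
    have := hd.ne'
    intro h
    apply this
    have : ((2*m + α + β + 2 : ℝ) : ℂ) = 0 := by push_cast; push_cast at h; linear_combination h
    exact_mod_cast this
  constructor
  · have h1 : jacobiA α β (2*m) = -(α - β) / (2*m + α + β + 2) := by
      rw [jacobiA]
      rw [Odd.neg_one_pow ⟨m, by ring⟩]
      push_cast; ring_nf
    rw [h1]
    push_cast
    field_simp
  · exact hd'

lemma jacobiA_odd (α β : ℝ) (hα : -1 < α) (hβ : -1 < β) (m : ℕ) :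
    ((jacobiA α β (2*m+1) : ℝ) : ℂ) * ((2*m : ℂ) + α + β + 3) = -((α:ℂ) + β + 1) ∧
      ((2*m : ℂ) + α + β + 3) ≠ 0 := by
  have hd : (0:ℝ) < 2*m + α + β + 3 := by
    have : (0:ℝ) ≤ 2*m := by positivity
    linarith
  have hd' : ((2*m : ℂ) + α + β + 3) ≠ 0 := by
    have := hd.ne'
    intro h
    apply this
    have : ((2*m + α + β + 3 : ℝ) : ℂ) = 0 := by push_cast; push_cast at h; linear_combination h
    exact_mod_cast this
  constructor
  · have h1 : jacobiA α β (2*m+1) = -(α + β + 1) / (2*m + α + β + 3) := by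
      rw [jacobiA]
      rw [Even.neg_one_pow ⟨m+1, by ring⟩]
      push_cast; ring_nf
    rw [h1]
    push_cast
    field_simp
  · exact hd'

lemma eig_zero (α β : ℝ) : Eig α β 0 0 := by
  intro z hz hz2
  have h : psi (jacobiA α β) 0 = fun _ : ℂ => (1:ℂ) := by
    funext w
    rw [psi]
    norm_num
    rfl
  rw [h]
  simp

lemma inv_sq_ne_one {z : ℂ} (hz : z ≠ 0) (hz2 : z ^ 2 ≠ 1) : (z⁻¹) ^ 2 ≠ 1 := by
  rw [inv_pow]
  intro h
  apply hz2
  rw [inv_eq_one] at h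
  exact h

set_option maxHeartbeats 1000000 in
lemma key_odd (α β mC z X1 X2 D1 D2 A : ℂ) (hz : z ≠ 0) (h1z : (1:ℂ) - z^2 ≠ 0)
    (ha : A * (2*mC+α+β+2) = -(α-β))
    (H1 : z*(1-z^2)*D1 + z*((α+β+1)*z+(α-β))*(X2 - X1) = -mC*X1*(1-z^2))
    (H2 : (z^2-1)*D2 + z*((α+β+1)+(α-β)*z)*(X1 - X2) = -mC*z*(z^2-1)*X2) :
    z * (X2 + z*(D2*(-(z^2)⁻¹)) - A*D1)
      + z*((α+β+1)*z+(α-β))/(1-z^2)*((z⁻¹*X1 - A*X2) - (z*X2 - A*X1))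
      = (mC+α+β+2) * (z*X2 - A*X1) := by
  have key : z^3*(1-z^2)*X2 - z^2*(1-z^2)*D2 - A*z^3*(1-z^2)*D1
      + z^2*(((α:ℂ)+β+1)*z+(α-β))*(X1 + A*z*X1 - A*z*X2 - z^2*X2)
      = z^2*(1-z^2)*(mC+α+β+2)*(z*X2 - A*X1) := by
    linear_combination (-A*z^2)*H1 + z^2*H2 + z^2*(1-z^2)*X1*ha
  field_simp
  apply mul_left_cancel₀ (pow_ne_zero 2 hz)
  linear_combination key

set_option maxHeartbeats 1000000 in
lemma key_even (α β mC z X1 X2 D1 D2 A : ℂ) (hz : z ≠ 0) (h1z : (1:ℂ) - z^2 ≠ 0)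
    (ha : A * (2*mC+α+β+3) = -(α+β+1))
    (H1 : z*(1-z^2)*D1 + z*((α+β+1)*z+(α-β))*(X2 - X1) = (mC+α+β+2)*X1*(1-z^2))
    (H2 : (z^2-1)*D2 + z*((α+β+1)+(α-β)*z)*(X1 - X2) = (mC+α+β+2)*z*(z^2-1)*X2) :
    z * (D2*(-(z^2)⁻¹) - A*D1)
      + z*((α+β+1)*z+(α-β))/(1-z^2)*((X1 - A*X2) - (X2 - A*X1))
      = (-(mC+1)) * (X2 - A*X1) := by
  have key : -(1-z^2)*D2 - A*z^2*(1-z^2)*D1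
      + z^2*(((α:ℂ)+β+1)*z+(α-β))*(X1 - A*X2 - X2 + A*X1)
      = -(mC+1)*z*(1-z^2)*(X2 - A*X1) := by
    linear_combination (-A*z)*H1 + H2 + (-z*(1-z^2)*X1)*ha
  field_simp
  linear_combination key

lemma step_odd (α β : ℝ) (hα : -1 < α) (hβ : -1 < β) (m : ℕ)
    (ih : Eig α β (2*m) (-(m:ℂ))) : Eig α β (2*m+1) ((m:ℂ) + α + β + 2) := by
  intro z hz hz2
  have hz1 : z⁻¹ ≠ 0 := inv_ne_zero hz
  have hIH1 := ih z hz hz2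
  have hIH2 := ih z⁻¹ hz1 (inv_sq_ne_one hz hz2)
  rw [inv_inv] at hIH2
  set c := jacobiA α β with hc
  have hdf : DifferentiableAt ℂ (psi c (2*m)) z := psi_diff c _ z hz
  have hdfi : DifferentiableAt ℂ (psi c (2*m)) z⁻¹ := psi_diff c _ z⁻¹ hz1
  obtain ⟨ha, hden⟩ := jacobiA_even α β hα hβ m
  have hD : HasDerivAt (psi c (2*m+1))
      (psi c (2*m) z⁻¹ + z * (deriv (psi c (2*m)) z⁻¹ * (-(z ^ 2)⁻¹))
        - (c (2*m) : ℂ) * deriv (psi c (2*m)) z) z := by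
    have h4 : HasDerivAt (fun w : ℂ => psi c (2*m) w⁻¹)
        (deriv (psi c (2*m)) z⁻¹ * (-(z ^ 2)⁻¹)) z :=
      (hdfi.hasDerivAt).comp z (hasDerivAt_inv hz)
    have h5 := ((hasDerivAt_id z).mul h4).sub ((hdf.hasDerivAt).const_mul ((c (2*m) : ℂ)))
    rw [one_mul] at h5
    apply h5.congr_of_eventuallyEq
    filter_upwards [compl_singleton_mem_nhds hz] with w hw
    exact psi_rec_odd c m w hw
  rw [hD.deriv, psi_rec_odd c m z hz, psi_rec_odd c m z⁻¹ hz1, inv_inv]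
  have h1z : (1 : ℂ) - z ^ 2 ≠ 0 := fun h => hz2 (by linear_combination -h)
  have hz2' : z^2 - 1 ≠ 0 := sub_ne_zero_of_ne hz2
  generalize hgX1 : psi c (2*m) z = X1 at hIH1 hIH2 ⊢
  generalize hgX2 : psi c (2*m) z⁻¹ = X2 at hIH1 hIH2 ⊢
  generalize hgD1 : deriv (psi c (2*m)) z = D1 at hIH1 ⊢
  generalize hgD2 : deriv (psi c (2*m)) z⁻¹ = D2 at hIH2 ⊢
  have H1 : z*(1-z^2)*D1 + z*(((α:ℂ)+β+1)*z+((α:ℂ)-β))*(X2 - X1)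
      = -(m:ℂ)*X1*(1-z^2) := by
    field_simp at hIH1
    linear_combination hIH1
  have H2 : (z^2-1)*D2 + z*(((α:ℂ)+β+1)+((α:ℂ)-β)*z)*(X1 - X2)
      = -(m:ℂ)*z*(z^2-1)*X2 := by
    field_simp at hIH2
    linear_combination hIH2
  exact key_odd (α:ℂ) (β:ℂ) (m:ℂ) z X1 X2 D1 D2 _ hz h1z ha H1 H2


lemma step_even (α β : ℝ) (hα : -1 < α) (hβ : -1 < β) (m : ℕ)
    (ih : Eig α β (2*m+1) ((m:ℂ) + α + β + 2)) : Eig α β (2*m+2) (-((m:ℂ)+1)) := by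
  intro z hz hz2
  have hz1 : z⁻¹ ≠ 0 := inv_ne_zero hz
  have hIH1 := ih z hz hz2
  have hIH2 := ih z⁻¹ hz1 (inv_sq_ne_one hz hz2)
  rw [inv_inv] at hIH2
  set c := jacobiA α β with hc
  have hdf : DifferentiableAt ℂ (psi c (2*m+1)) z := psi_diff c _ z hz
  have hdfi : DifferentiableAt ℂ (psi c (2*m+1)) z⁻¹ := psi_diff c _ z⁻¹ hz1
  obtain ⟨ha, hden⟩ := jacobiA_odd α β hα hβ m
  have hD : HasDerivAt (psi c (2*m+2))
      (deriv (psi c (2*m+1)) z⁻¹ * (-(z ^ 2)⁻¹) - (c (2*m+1) : ℂ) * deriv (psi c (2*m+1)) z) z := by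
    have h4 : HasDerivAt (fun w : ℂ => psi c (2*m+1) w⁻¹)
        (deriv (psi c (2*m+1)) z⁻¹ * (-(z ^ 2)⁻¹)) z :=
      (hdfi.hasDerivAt).comp z (hasDerivAt_inv hz)
    have h5 := h4.sub ((hdf.hasDerivAt).const_mul ((c (2*m+1) : ℂ)))
    apply h5.congr_of_eventuallyEq
    filter_upwards [compl_singleton_mem_nhds hz] with w hw
    exact psi_rec_even c m w hw
  rw [hD.deriv, psi_rec_even c m z hz, psi_rec_even c m z⁻¹ hz1, inv_inv]
  have h1z : (1 : ℂ) - z ^ 2 ≠ 0 := fun h => hz2 (by linear_combination -h)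
  have hz2' : z^2 - 1 ≠ 0 := sub_ne_zero_of_ne hz2
  generalize hgX1 : psi c (2*m+1) z = X1 at hIH1 hIH2 ⊢
  generalize hgX2 : psi c (2*m+1) z⁻¹ = X2 at hIH1 hIH2 ⊢
  generalize hgD1 : deriv (psi c (2*m+1)) z = D1 at hIH1 ⊢
  generalize hgD2 : deriv (psi c (2*m+1)) z⁻¹ = D2 at hIH2 ⊢
  have H1 : z*(1-z^2)*D1 + z*(((α:ℂ)+β+1)*z+((α:ℂ)-β))*(X2 - X1)
      = ((m:ℂ)+α+β+2)*X1*(1-z^2) := by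
    field_simp at hIH1
    linear_combination hIH1
  have H2 : (z^2-1)*D2 + z*(((α:ℂ)+β+1)+((α:ℂ)-β)*z)*(X1 - X2)
      = ((m:ℂ)+α+β+2)*z*(z^2-1)*X2 := by
    field_simp at hIH2
    linear_combination hIH2
  exact key_even (α:ℂ) (β:ℂ) (m:ℂ) z X1 X2 D1 D2 _ hz h1z ha H1 H2

lemma eig_all (α β : ℝ) (hα : -1 < α) (hβ : -1 < β) :
    ∀ m : ℕ, Eig α β (2*m) (-(m:ℂ)) ∧ Eig α β (2*m+1) ((m:ℂ) + α + β + 2) := by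
  intro m
  induction m with
  | zero =>
    have h0 : Eig α β (2*0) (-((0:ℕ):ℂ)) := by
      simp only [Nat.cast_zero, neg_zero]
      exact eig_zero α β
    exact ⟨h0, step_odd α β hα hβ 0 h0⟩
  | succ m ih =>
    have heven : Eig α β (2*(m+1)) (-((m+1:ℕ):ℂ)) := by
      have h : 2*(m+1) = 2*m+2 := by ring
      rw [h, show (-((m+1:ℕ):ℂ)) = -((m:ℂ)+1) by push_cast; ring]
      exact step_even α β hα hβ m ih.2
    exact ⟨heven, step_odd α β hα hβ (m+1) heven⟩


/-- the Dunkl-type eigenvalue equation of the CMV Laurent polynomials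
ψ_n(z;1) associated with the Jacobi Verblunsky parameters. -/
theorem stmt_3 (α β : ℝ) (hα : -1 < α) (hβ : -1 < β) (n : ℕ) (z : ℂ)
    (hz : z ≠ 0) (hz2 : z ^ 2 ≠ 1) :
    z * deriv (psi (jacobiA α β) n) z
      + z * (((α : ℂ) + β + 1) * z + ((α : ℂ) - β)) / (1 - z ^ 2)
        * (psi (jacobiA α β) n z⁻¹ - psi (jacobiA α β) n z)
      = (if Even n then -(n : ℂ) / 2 else ((n : ℂ) + 1) / 2 + (α : ℂ) + β + 1)
        * psi (jacobiA α β) n z := by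
  rcases Nat.even_or_odd n with hn | hn
  · obtain ⟨m, rfl⟩ := hn
    rw [show m + m = 2*m from by ring] at *
    rw [if_pos (even_two_mul m)]
    rw [show (-((2*m:ℕ):ℂ)/2) = -(m:ℂ) from by push_cast; ring]
    exact (eig_all α β hα hβ m).1 z hz hz2
  · obtain ⟨m, rfl⟩ := hn
    rw [if_neg (by simp [Nat.even_add_one, Nat.even_mul])]
    rw [show (((2*m+1:ℕ):ℂ)+1)/2 + (α:ℂ) + β + 1 = (m:ℂ) + α + β + 2 from by push_cast; ring]
    exact (eig_all α β hα hβ m).2 z hz hz2
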